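/- Let u ∈ Σ* and let T(u) = lfp F^u be the parse table of a GTDPL program P on u, defined as the least fixed point of the table operator F^u. Then for all row indices i and column indices j with j ≤ |u|: T(u)_{ij} = f iff (A_i, u_j) ⇒ f; T(u)_{ij} = m ∈ ℕ iff (A_i, u_j) ⇒ u_{j+m}; and T(u)_{ij} = ⊥ iff there is no r with (A_i, u_j) ⇒ r. Moreover for j > |u|, T(u)_{ij} = T(u)_{i|u|}. Conversely, any table satisfying these four properties equals T(u). -/

import Mathlib

/-- GTDPL rule right-hand sides: `ε`, failure `f`, a terminal symbol, or a
ternary expression `A_x[A_y,A_z]` (nonterminals are rule indices). -/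
inductive GExpr (σ ν : Type) : Type
  | eps : GExpr σ ν
  | fail : GExpr σ ν
  | sym (a : σ) : GExpr σ ν
  | tern (x y z : ν) : GExpr σ ν

/-- Parse results: a number of consumed symbols, or failure `f`. -/
inductive Res : Type
  | ok (m : ℕ) : Res
  | fail : Res

/-- Tables with entries in `Res_⊥` (`none` is the bottom element `⊥`),
indexed by a rule index and a column. -/
abbrev Table (ν : Type) := ν → ℕ → Option Res

/-- The pointwise table order, with the flat order (`⊥` below everything) on entries. -/
def tableLE {ν : Type} (T T' : Table ν) : Prop :=
  ∀ i j, T i j = none ∨ T i j = T' i j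

/-- The bottom table `⊥`. -/
def botTable {ν : Type} : Table ν := fun _ _ => none

/-- One application of the parse-table operator `F^u` of a program `rule` on
input `u`; columns at offsets `≥ |u|` carry the end marker `hash` (modelling the
infinite padding `w = u·#^ω`), which matches no symbol of any rule since `# ∉ Σ`. -/
def step {σ ν : Type} [DecidableEq σ] (rule : ν → GExpr σ ν) (hash : σ)
    (u : List σ) (T : Table ν) : Table ν :=
  fun i j =>
    match rule i with
    | .eps => some (.ok 0)
    | .fail => some .fail
    | .sym a => if u.getD j hash = a then some (.ok 1) else some .fail
    | .tern x y z =>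
      match T x j with
      | some (.ok m) =>
        match T y (j + m) with
        | some (.ok m') => some (.ok (m + m'))
        | some .fail => some .fail
        | none => none
      | some .fail => T z j
      | none => none

/-- The restricted operator `F^{(u)} = F^u` applied only at columns `j < |u|`,
leaving all other entries unchanged. -/
def stepPrefix {σ ν : Type} [DecidableEq σ] (rule : ν → GExpr σ ν) (hash : σ)
    (u : List σ) (T : Table ν) : Table ν :=
  fun i j => if j < u.length then step rule hash u T i j else T i j

/-- `T` is the least fixed point `⨆ₙ Fⁿ(⊥)` of the continuous table operator `F`,
characterized entrywise: an entry is resolved in `T` iff it is resolved (with the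
same value) at some finite stage of the iteration from `⊥`. -/
def IsLfp {ν : Type} (F : Table ν → Table ν) (T : Table ν) : Prop :=
  ∀ i j r, T i j = some r ↔ ∃ n, F^[n] botTable i j = some r

/-- The dynamic dependency map `D^T`: for a complex rule `A_i ← A_x[A_y,A_z]`,
the entry `(i,j)` depends on `(y, j+m)` if `T x j = m`, on `(z, j)` if
`T x j = f`, and is undefined otherwise (also for simple rules). -/
def dynDep {σ ν : Type} (rule : ν → GExpr σ ν) (T : Table ν) (i : ν) (j : ℕ) :
    Option (ν × ℕ) :=
  match rule i with
  | .tern x y z =>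
    match T x j with
    | some (.ok m) => some (y, j + m)
    | some .fail => some (z, j)
    | none => none
  | _ => none

/-- The GTDPL matching relation `(A_i, u) ⇒ r` of the program `rule`:
`some v` is success with remaining suffix `v`, `none` is failure `f`. -/
inductive Matches {σ ν : Type} (rule : ν → GExpr σ ν) :
    ν → List σ → Option (List σ) → Prop
  | eps {A : ν} {u : List σ} : rule A = .eps → Matches rule A u (some u)
  | fail {A : ν} {u : List σ} : rule A = .fail → Matches rule A u none
  | symOk {A : ν} {a : σ} {u : List σ} :
      rule A = .sym a → Matches rule A (a :: u) (some u)
  | symFail {A : ν} {a : σ} {u : List σ} :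
      rule A = .sym a → (∀ u', u ≠ a :: u') → Matches rule A u none
  | ternSucc {A x y z : ν} {u v : List σ} {r : Option (List σ)} :
      rule A = .tern x y z →
      Matches rule x u (some v) → Matches rule y v r → Matches rule A u r
  | ternFail {A x y z : ν} {u : List σ} {r : Option (List σ)} :
      rule A = .tern x y z →
      Matches rule x u none → Matches rule z u r → Matches rule A u r

/-- The characterizing properties of the parse table `T(u)`: for `j ≤ |u|`,
`T_{ij} = f` iff `(A_i, u_j) ⇒ f`; `T_{ij} = m` iff `(A_i, u_j) ⇒ u_{j+m}`
(so `j + m ≤ |u|`); `T_{ij} = ⊥` iff `(A_i, u_j)` has no result; and for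
`j > |u|`, `T_{ij} = T_{i|u|}`. -/
def FundamentalProps {σ ν : Type} (rule : ν → GExpr σ ν) (u : List σ)
    (T : Table ν) : Prop :=
  (∀ i j, j ≤ u.length →
    (T i j = some .fail ↔ Matches rule i (u.drop j) none) ∧
    (∀ m, T i j = some (.ok m) ↔
      (j + m ≤ u.length ∧ Matches rule i (u.drop j) (some (u.drop (j + m))))) ∧
    (T i j = none ↔ ∀ r, ¬ Matches rule i (u.drop j) r)) ∧
  (∀ i j, u.length < j → T i j = T i u.length)


section Aux

variable {σ ν : Type} [DecidableEq σ] (rule : ν → GExpr σ ν) (hash : σ) (u : List σ)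

lemma step_mono {T T' : Table ν}
    (h : ∀ i j r, T i j = some r → T' i j = some r) :
    ∀ i j r, step rule hash u T i j = some r → step rule hash u T' i j = some r := by
  intro i j r hr
  unfold step at hr ⊢
  cases hA : rule i with
  | eps => rw [hA] at hr; exact hr
  | fail => rw [hA] at hr; exact hr
  | sym a => rw [hA] at hr; exact hr
  | tern x y z =>
    rw [hA] at hr
    dsimp only at hr ⊢
    cases hx : T x j with
    | none => rw [hx] at hr; exact absurd hr (by simp)
    | some rx =>
      rw [hx] at hr
      rw [h x j _ hx]
      cases rx with
      | fail =>
        dsimp only at hr ⊢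
        exact h z j r hr
      | ok m =>
        dsimp only at hr ⊢
        cases hy : T y (j + m) with
        | none => rw [hy] at hr; exact absurd hr (by simp)
        | some ry =>
          rw [hy] at hr
          rw [h y (j + m) _ hy]
          exact hr

lemma stage_succ :
    ∀ n i j r, (step rule hash u)^[n] botTable i j = some r →
      (step rule hash u)^[n + 1] botTable i j = some r := by
  intro n
  induction n with
  | zero => intro i j r hr; exact absurd hr (by simp [botTable])
  | succ n ih =>
    intro i j r hr
    rw [Function.iterate_succ_apply'] at hr ⊢
    exact step_mono rule hash u ih i j r hr

lemma stage_mono {n n' : ℕ} (hnn : n ≤ n') :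
    ∀ i j r, (step rule hash u)^[n] botTable i j = some r →
      (step rule hash u)^[n'] botTable i j = some r := by
  induction hnn with
  | refl => exact fun i j r h => h
  | step _ ih => exact fun i j r hr => stage_succ rule hash u _ i j r (ih i j r hr)

lemma sound (hrule : ∀ i a, rule i = .sym a → a ≠ hash) (hu : hash ∉ u) :
    ∀ n i j, j ≤ u.length →
      ((step rule hash u)^[n] botTable i j = some .fail →
        Matches rule i (u.drop j) none) ∧
      (∀ m, (step rule hash u)^[n] botTable i j = some (.ok m) →
        j + m ≤ u.length ∧ Matches rule i (u.drop j) (some (u.drop (j + m)))) := by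
  intro n
  induction n with
  | zero => intro i j hj; simp [botTable]
  | succ n ih =>
    intro i j hj
    rw [Function.iterate_succ_apply']
    set S := (step rule hash u)^[n] botTable with hS
    unfold step
    cases hA : rule i with
    | eps =>
      dsimp only
      refine ⟨by simp, fun m hm => ?_⟩
      simp only [Option.some.injEq, Res.ok.injEq] at hm
      subst hm
      exact ⟨by omega, by simpa using Matches.eps hA⟩
    | fail => exact ⟨fun _ => Matches.fail hA, by simp⟩
    | sym a =>
      dsimp only
      by_cases hga : u.getD j hash = a
      · have hjlt : j < u.length := by
          rcases Nat.lt_or_ge j u.length with h | h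
          · exact h
          · exfalso
            rw [List.getD_eq_default u hash h] at hga
            exact hrule i a hA hga.symm
        have hgae : u[j] = a := by
          rw [← List.getD_eq_getElem u hash hjlt]; exact hga
        rw [if_pos hga]
        refine ⟨fun h => by simp at h, fun m hm => ?_⟩
        obtain rfl : (1 : ℕ) = m := by simpa using hm
        refine ⟨by omega, ?_⟩
        rw [List.drop_eq_getElem_cons hjlt, hgae]
        exact Matches.symOk hA
      · rw [if_neg hga]
        refine ⟨fun _ => ?_, fun m hm => by simp at hm⟩
        refine Matches.symFail hA (fun u' hu' => ?_)
        have hjlt : j < u.length := by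
          have := congrArg List.length hu'
          simp [List.length_drop] at this
          omega
        rw [List.drop_eq_getElem_cons hjlt] at hu'
        have : u[j] = a := (List.cons_eq_cons.mp hu').1
        rw [List.getD_eq_getElem u hash hjlt] at hga
        exact hga this
    | tern x y z =>
      dsimp only
      cases hx : S x j with
      | none => simp
      | some rx =>
        cases rx with
        | fail =>
          dsimp only
          have hxm : Matches rule x (u.drop j) none := (ih x j hj).1 hx
          refine ⟨fun hz => ?_, fun m hz => ?_⟩
          · exact Matches.ternFail hA hxm ((ih z j hj).1 hz)
          · obtain ⟨h1, h2⟩ := (ih z j hj).2 m hz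
            exact ⟨h1, Matches.ternFail hA hxm h2⟩
        | ok m =>
          dsimp only
          obtain ⟨hjm, hxm⟩ := (ih x j hj).2 m hx
          cases hy : S y (j + m) with
          | none => simp
          | some ry =>
            cases ry with
            | fail =>
              dsimp only
              refine ⟨fun _ => ?_, by simp⟩
              exact Matches.ternSucc hA hxm ((ih y (j + m) hjm).1 hy)
            | ok m' =>
              dsimp only
              obtain ⟨hjmm, hym⟩ := (ih y (j + m) hjm).2 m' hy
              refine ⟨by simp, fun k hk => ?_⟩
              simp only [Option.some.injEq, Res.ok.injEq] at hk
              subst hk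
              refine ⟨by omega, ?_⟩
              rw [← Nat.add_assoc]
              exact Matches.ternSucc hA hxm hym

lemma complete (hrule : ∀ i a, rule i = .sym a → a ≠ hash) (hu : hash ∉ u)
    {i : ν} {w : List σ} {r : Option (List σ)} (h : Matches rule i w r) :
    ∀ j, j ≤ u.length → w = u.drop j →
      (r = none → ∃ n, (step rule hash u)^[n] botTable i j = some .fail) ∧
      (∀ v, r = some v → ∃ m n, v = u.drop (j + m) ∧ j + m ≤ u.length ∧
        (step rule hash u)^[n] botTable i j = some (.ok m)) := by
  induction h with
  | @eps A w' hA =>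
    intro j hj hw
    refine ⟨by simp, fun v hv => ?_⟩
    refine ⟨0, 1, ?_, by omega, by simp [step, hA]⟩
    simp only [Option.some.injEq] at hv
    rw [Nat.add_zero, ← hv, hw]
  | @fail A w' hA =>
    intro j hj hw
    exact ⟨fun _ => ⟨1, by simp [step, hA]⟩, by simp⟩
  | @symOk A a w' hA =>
    intro j hj hw
    have hjlt : j < u.length := by
      have := congrArg List.length hw
      simp [List.length_drop] at this
      omega
    rw [List.drop_eq_getElem_cons hjlt] at hw
    obtain ⟨ha, hw'⟩ := List.cons_eq_cons.mp hw
    refine ⟨by simp, fun v hv => ?_⟩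
    simp only [Option.some.injEq] at hv
    refine ⟨1, 1, by rw [← hv, hw'], by omega, ?_⟩
    have hga : u.getD j hash = a := by
      rw [List.getD_eq_getElem u hash hjlt]; exact ha.symm
    rw [Function.iterate_one]
    unfold step
    rw [hA]
    dsimp only
    rw [if_pos hga]
  | @symFail A a w' hA hne =>
    intro j hj hw
    refine ⟨fun _ => ⟨1, ?_⟩, by simp⟩
    have hga : u.getD j hash ≠ a := by
      rcases Nat.lt_or_ge j u.length with hlt | hge
      · rw [List.getD_eq_getElem u hash hlt]
        intro hc
        exact hne (u.drop (j + 1)) (by rw [hw, List.drop_eq_getElem_cons hlt, hc])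
      · rw [List.getD_eq_default u hash hge]
        exact fun hc => hrule A a hA hc.symm
    rw [Function.iterate_one]
    unfold step
    rw [hA]
    dsimp only
    rw [if_neg hga]
  | @ternSucc A x y z w' v r' hA hx hy ihx ihy =>
    intro j hj hw
    obtain ⟨m, n1, hv, hjm, hs1⟩ := (ihx j hj hw).2 v rfl
    constructor
    · intro hr
      obtain ⟨n2, hs2⟩ := (ihy (j + m) hjm hv).1 hr
      refine ⟨max n1 n2 + 1, ?_⟩
      rw [Function.iterate_succ_apply']
      have h1 := stage_mono rule hash u (Nat.le_max_left n1 n2) x j _ hs1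
      have h2 := stage_mono rule hash u (Nat.le_max_right n1 n2) y (j + m) _ hs2
      simp [step, hA, h1, h2]
    · intro v' hv'
      obtain ⟨m', n2, hv2, hjmm, hs2⟩ := (ihy (j + m) hjm hv).2 v' hv'
      refine ⟨m + m', max n1 n2 + 1, by rw [hv2, Nat.add_assoc], by omega, ?_⟩
      rw [Function.iterate_succ_apply']
      have h1 := stage_mono rule hash u (Nat.le_max_left n1 n2) x j _ hs1
      have h2 := stage_mono rule hash u (Nat.le_max_right n1 n2) y (j + m) _ hs2
      simp [step, hA, h1, h2]
  | @ternFail A x y z w' r' hA hx hz ihx ihz =>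
    intro j hj hw
    obtain ⟨n1, hs1⟩ := (ihx j hj hw).1 rfl
    constructor
    · intro hr
      obtain ⟨n2, hs2⟩ := (ihz j hj hw).1 hr
      refine ⟨max n1 n2 + 1, ?_⟩
      rw [Function.iterate_succ_apply']
      have h1 := stage_mono rule hash u (Nat.le_max_left n1 n2) x j _ hs1
      have h2 := stage_mono rule hash u (Nat.le_max_right n1 n2) z j _ hs2
      simp [step, hA, h1, h2]
    · intro v' hv'
      obtain ⟨m, n2, hv2, hjm, hs2⟩ := (ihz j hj hw).2 v' hv'
      refine ⟨m, max n1 n2 + 1, hv2, hjm, ?_⟩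
      rw [Function.iterate_succ_apply']
      have h1 := stage_mono rule hash u (Nat.le_max_left n1 n2) x j _ hs1
      have h2 := stage_mono rule hash u (Nat.le_max_right n1 n2) z j _ hs2
      simp [step, hA, h1, h2]

lemma stage_high :
    ∀ n i j, u.length ≤ j →
      (step rule hash u)^[n] botTable i j = (step rule hash u)^[n] botTable i u.length := by
  intro n
  induction n with
  | zero => intro i j hj; rfl
  | succ n ih =>
    intro i j hj
    rw [Function.iterate_succ_apply']
    set S := (step rule hash u)^[n] botTable with hS
    unfold step
    cases hA : rule i with
    | eps => rfl
    | fail => rfl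
    | sym a =>
      dsimp only
      rw [List.getD_eq_default u hash hj, List.getD_eq_default u hash (le_refl _)]
    | tern x y z =>
      dsimp only
      rw [ih x j hj]
      cases hxL : S x u.length with
      | none => rfl
      | some rx =>
        cases rx with
        | fail => exact ih z j hj
        | ok m =>
          dsimp only
          rw [ih y (j + m) (by omega), ih y (u.length + m) (by omega)]

end Aux

/-- The fundamental theorem of parse tables: the parse table
`T(u) = lfp F^u` tabulates the operational semantics of the program on all
suffixes of `u`, is constant beyond column `|u|`, and is the unique table with
these properties. -/
theorem fundamental_theorem {σ ν : Type} [DecidableEq σ]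
    (rule : ν → GExpr σ ν) (hash : σ)
    (hrule : ∀ i a, rule i = .sym a → a ≠ hash)
    (u : List σ) (hu : hash ∉ u)
    (T : Table ν) (hT : IsLfp (step rule hash u) T) :
    FundamentalProps rule u T ∧
      ∀ T' : Table ν, FundamentalProps rule u T' → T' = T := by
  classical
  have L := u.length
  -- main characterization at columns ≤ |u|
  have hmain : ∀ i j, j ≤ u.length →
      (T i j = some .fail ↔ Matches rule i (u.drop j) none) ∧
      (∀ m, T i j = some (.ok m) ↔
        (j + m ≤ u.length ∧ Matches rule i (u.drop j) (some (u.drop (j + m))))) ∧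
      (T i j = none ↔ ∀ r, ¬ Matches rule i (u.drop j) r) := by
    intro i j hj
    refine ⟨⟨fun hf => ?_, fun hM => ?_⟩, fun m => ⟨fun hm => ?_, fun hM => ?_⟩, ⟨fun hn r hM => ?_, fun hno => ?_⟩⟩
    · obtain ⟨n, hn⟩ := (hT i j _).mp hf
      exact (sound rule hash u hrule hu n i j hj).1 hn
    · obtain ⟨n, hn⟩ := (complete rule hash u hrule hu hM j hj rfl).1 rfl
      exact (hT i j _).mpr ⟨n, hn⟩
    · obtain ⟨n, hn⟩ := (hT i j _).mp hm
      exact (sound rule hash u hrule hu n i j hj).2 m hn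
    · obtain ⟨hjm, hM'⟩ := hM
      obtain ⟨m', n, hv, hjm', hn⟩ :=
        (complete rule hash u hrule hu hM' j hj rfl).2 _ rfl
      have : m = m' := by
        have := congrArg List.length hv
        simp [List.length_drop] at this
        omega
      subst this
      exact (hT i j _).mpr ⟨n, hn⟩
    · cases r with
      | none =>
        obtain ⟨n, hs⟩ := (complete rule hash u hrule hu hM j hj rfl).1 rfl
        have h2 := (hT i j _).mpr ⟨n, hs⟩
        rw [h2] at hn
        exact absurd hn (by simp)
      | some v =>
        obtain ⟨m, n, hv, hjm, hs⟩ := (complete rule hash u hrule hu hM j hj rfl).2 v rfl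
        have h2 := (hT i j _).mpr ⟨n, hs⟩
        rw [h2] at hn
        exact absurd hn (by simp)
    · cases hTij : T i j with
      | none => rfl
      | some r =>
        exfalso
        obtain ⟨n, hn⟩ := (hT i j r).mp hTij
        cases r with
        | fail => exact hno _ ((sound rule hash u hrule hu n i j hj).1 hn)
        | ok m => exact hno _ ((sound rule hash u hrule hu n i j hj).2 m hn).2
  -- constancy beyond column |u|
  have hhigh : ∀ i j, u.length < j → T i j = T i u.length := by
    intro i j hj
    cases hTL : T i u.length with
    | some r =>
      obtain ⟨n, hn⟩ := (hT i u.length r).mp hTL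
      exact (hT i j r).mpr ⟨n, by rw [stage_high rule hash u n i j (by omega)]; exact hn⟩
    | none =>
      cases hTj : T i j with
      | none => rfl
      | some r =>
        exfalso
        obtain ⟨n, hn⟩ := (hT i j r).mp hTj
        rw [stage_high rule hash u n i j (by omega)] at hn
        rw [(hT i u.length r).mpr ⟨n, hn⟩] at hTL
        exact absurd hTL (by simp)
  refine ⟨⟨hmain, hhigh⟩, ?_⟩
  -- uniqueness
  intro T' ⟨hmain', hhigh'⟩
  have hle : ∀ i j, j ≤ u.length → T' i j = T i j := by
    intro i j hj
    obtain ⟨hf', hok', hn'⟩ := hmain' i j hj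
    obtain ⟨hf, hok, hn⟩ := hmain i j hj
    cases hT'ij : T' i j with
    | none => exact ((hn).mpr ((hn').mp hT'ij)).symm
    | some r =>
      cases r with
      | fail => exact ((hf).mpr ((hf').mp hT'ij)).symm
      | ok m => exact ((hok m).mpr ((hok' m).mp hT'ij)).symm
  funext i j
  rcases le_or_gt j u.length with hj | hj
  · exact hle i j hj
  · rw [hhigh' i j hj, hhigh i j hj, hle i u.length (le_refl _)]
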